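/- In a combinatorial horoball, no geodesic contains an ascending vertical segment immediately following a descending vertical segment: if a geodesic path descends from level m to a lower level, it never returns to level m. -/

import Mathlib

/-- The combinatorial horoball based on a graph `Λ`: vertices are `Λ⁰ × ℕ`,
vertical edges join `(v,n)` to `(v,n+1)`, horizontal edges join `(v,n)` to `(w,n)`
whenever `0 < d_Λ(v,w) ≤ 2^n`. -/
def horoball {V : Type*} (Λ : SimpleGraph V) : SimpleGraph (V × ℕ) where
  Adj a b := (a.1 = b.1 ∧ (a.2 + 1 = b.2 ∨ b.2 + 1 = a.2)) ∨
    (a.2 = b.2 ∧ a.1 ≠ b.1 ∧ Λ.dist a.1 b.1 ≤ 2 ^ a.2)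
  symm := by
    constructor
    rintro ⟨x, m⟩ ⟨y, k⟩ (⟨h1, h2⟩ | ⟨h1, h2, h3⟩)
    · exact Or.inl ⟨h1.symm, h2.symm⟩
    · exact Or.inr ⟨h1.symm, h2.symm, by rwa [SimpleGraph.dist_comm, ← h1]⟩
  loopless := by
    constructor
    rintro ⟨x, m⟩ (⟨_, h⟩ | ⟨_, h, _⟩) <;> simp_all

/-- The level-`n` subgraph of the combinatorial horoball on `Λ`, identified with a graph
on the vertices of `Λ`: it is the Rips graph `Rips_{2^n}(Λ)`, whose edges join distinct
vertices at `Λ`-distance at most `2^n`. -/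
def ripsLevel {V : Type*} (Λ : SimpleGraph V) (n : ℕ) : SimpleGraph V where
  Adj v w := v ≠ w ∧ Λ.dist v w ≤ 2 ^ n
  symm := ⟨fun v w h => ⟨h.1.symm, by rw [SimpleGraph.dist_comm]; exact h.2⟩⟩
  loopless := ⟨fun v h => h.1 rfl⟩

namespace HoroAux

open SimpleGraph

variable {V : Type*} {G : SimpleGraph V}

/-- Initial segment of a walk. -/
def htake {u v : V} : (p : G.Walk u v) → (n : ℕ) → G.Walk u (p.getVert n)
  | .nil, _ => .nil
  | .cons _ _, 0 => .nil
  | .cons h q, n + 1 => .cons h (htake q n)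

lemma length_htake {u v : V} (p : G.Walk u v) (n : ℕ) :
    (htake p n).length = min n p.length := by
  induction p generalizing n with
  | nil => simp [htake]
  | cons h q ih =>
    cases n with
    | zero => simp [htake]; rfl
    | succ n => simp [htake, ih]

lemma length_drop {u v : V} (p : G.Walk u v) (n : ℕ) :
    (p.drop n).length = p.length - n := by
  induction p generalizing n with
  | nil => cases n <;> simp [Walk.drop]
  | cons h q ih =>
    cases n with
    | zero => simp [Walk.drop]
    | succ n => simp [Walk.drop, ih]

lemma exists_mid (hc : G.Connected) (x y : V) (t : ℕ) (ht : t ≤ G.dist x y) :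
    ∃ z, G.dist x z = t ∧ G.dist z y = G.dist x y - t := by
  obtain ⟨p, hp⟩ := hc.exists_walk_length_eq_dist x y
  have h1 : G.dist x (p.getVert t) ≤ t := by
    have := SimpleGraph.dist_le (htake p t)
    rwa [length_htake, hp, min_eq_left ht] at this
  have h2 : G.dist (p.getVert t) y ≤ G.dist x y - t := by
    have := SimpleGraph.dist_le (p.drop t)
    rwa [length_drop, hp] at this
  have h3 := hc.dist_triangle (u := x) (v := p.getVert t) (w := y)
  exact ⟨p.getVert t, by omega, by omega⟩

/-- A horizontal walk at level `m` in the horoball, of length at most `k`, exists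
between `(x,m)` and `(y,m)` whenever `d_Λ(x,y) ≤ k·2^(m-1)`. -/
lemma repl_walk {Λ : SimpleGraph V} (hΛ : Λ.Connected) (m : ℕ) (hm : 1 ≤ m) :
    ∀ k (x y : V), Λ.dist x y ≤ k * 2 ^ (m - 1) →
    ∃ p : (horoball Λ).Walk (x, m) (y, m), p.length ≤ k := by
  have hs_pos : 0 < 2 ^ (m - 1) := Nat.pow_pos (by norm_num)
  have hs_le : (2 : ℕ) ^ (m - 1) ≤ 2 ^ m := Nat.pow_le_pow_right (by norm_num) (by omega)
  intro k
  induction k with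
  | zero =>
    intro x y h
    have hxy : x = y := hΛ.dist_eq_zero_iff.mp (by omega)
    subst hxy
    exact ⟨.nil, by simp⟩
  | succ k ih =>
    intro x y h
    by_cases hk : Λ.dist x y ≤ k * 2 ^ (m - 1)
    · obtain ⟨p, hp⟩ := ih x y hk
      exact ⟨p, hp.trans (Nat.le_succ k)⟩
    push_neg at hk
    by_cases hds : Λ.dist x y ≤ 2 ^ m
    · have hne : x ≠ y := by
        intro he
        rw [he, SimpleGraph.dist_self] at hk
        omega
      exact ⟨.cons (show (horoball Λ).Adj (x, m) (y, m) from Or.inr ⟨rfl, hne, hds⟩) .nil, by simp⟩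
    · push_neg at hds
      have hsd : 2 ^ (m - 1) ≤ Λ.dist x y := le_of_lt (lt_of_le_of_lt hs_le hds)
      obtain ⟨z, hz1, hz2⟩ := exists_mid hΛ x y (2 ^ (m - 1)) hsd
      have hzy : Λ.dist z y ≤ k * 2 ^ (m - 1) := by
        rw [Nat.succ_mul] at h
        omega
      obtain ⟨p, hp⟩ := ih z y hzy
      have hxz : x ≠ z := by
        intro he
        rw [he, SimpleGraph.dist_self] at hz1
        omega
      exact ⟨.cons (show (horoball Λ).Adj (x, m) (z, m) from Or.inr ⟨rfl, hxz, by rw [hz1]; exact hs_le⟩) p,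
        by simpa using Nat.succ_le_succ hp⟩

end HoroAux

/-- In a combinatorial horoball, no geodesic ascends after descending: if a geodesic
walk is at level `m` at time `i` and strictly below level `m` at a later time `j`,
then it stays strictly below level `m` at all times `l ≥ j`; i.e. having descended
from level `m`, it never returns to level `m`. -/
theorem horoball_geodesic_no_descend_ascend {V : Type*} (Λ : SimpleGraph V)
    (hΛ : Λ.Connected) {a b : V × ℕ} (w : (horoball Λ).Walk a b)
    (hgeo : w.length = (horoball Λ).dist a b) (m : ℕ) :
    ∀ i j l : ℕ, i ≤ j → j ≤ l →
      (w.getVert i).2 = m → (w.getVert j).2 < m → (w.getVert l).2 < m := by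
  intro i j l hij hjl him hjm
  by_contra hlm
  push_neg at hlm
  have hm : 1 ≤ m := by omega
  -- level changes by at most one at each step; if the level changes, the step is vertical
  have hdiff : ∀ t, (w.getVert t).2 ≠ (w.getVert (t + 1)).2 →
      t < w.length ∧ (w.getVert t).1 = (w.getVert (t + 1)).1 ∧
        ((w.getVert t).2 + 1 = (w.getVert (t + 1)).2 ∨
          (w.getVert (t + 1)).2 + 1 = (w.getVert t).2) := by
    intro t hne
    have ht : t < w.length := by
      by_contra hc
      push_neg at hc
      have e1 := w.getVert_of_length_le hc
      have e2 := w.getVert_of_length_le (hc.trans (Nat.le_succ t))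
      rw [e1, e2] at hne
      exact hne rfl
    rcases w.adj_getVert_succ ht with ⟨h1, h2⟩ | ⟨h1, h2, h3⟩
    · exact ⟨ht, h1, h2⟩
    · exact absurd h1 hne
  -- q = first time ≥ j at which the level is ≥ m
  have hex : ∃ t, m ≤ (w.getVert (j + t)).2 := ⟨l - j, by rwa [Nat.add_sub_cancel' hjl]⟩
  have hfq : m ≤ (w.getVert (j + Nat.find hex)).2 := Nat.find_spec hex
  have hfmin : ∀ t, t < Nat.find hex → (w.getVert (j + t)).2 < m :=
    fun t ht => lt_of_not_ge (Nat.find_min hex ht)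
  have hf0 : Nat.find hex ≠ 0 := by
    intro h
    rw [h, Nat.add_zero] at hfq
    omega
  obtain ⟨f', hf'⟩ : ∃ f', Nat.find hex = f' + 1 := ⟨Nat.find hex - 1, by omega⟩
  have hq1lt : (w.getVert (j + f')).2 < m := hfmin f' (by omega)
  have hqm : m ≤ (w.getVert (j + f' + 1)).2 := by
    have heq : j + Nat.find hex = j + f' + 1 := by omega
    rwa [heq] at hfq
  set q1 := j + f' with hq1def
  have hjq1 : j ≤ q1 := Nat.le_add_right _ _
  obtain ⟨hq1len, hq1vert, hq1step⟩ := hdiff q1 (by omega)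
  have hq_eq : (w.getVert (q1 + 1)).2 = m := by omega
  -- p = last time ≤ j at which the level is ≥ m
  set p := Nat.findGreatest (fun t => m ≤ (w.getVert t).2) j with hpdef
  have hp_spec : m ≤ (w.getVert p).2 :=
    Nat.findGreatest_spec (P := fun t => m ≤ (w.getVert t).2) hij him.ge
  have hp_le : p ≤ j := Nat.findGreatest_le j
  have hp_max : ∀ t, p < t → t ≤ j → (w.getVert t).2 < m := fun t h1 h2 =>
    lt_of_not_ge (Nat.findGreatest_is_greatest (P := fun t => m ≤ (w.getVert t).2) h1 h2)
  have hpj : p < j := lt_of_le_of_ne hp_le (by intro h; rw [h] at hp_spec; omega)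
  have hp1 : (w.getVert (p + 1)).2 < m := hp_max (p + 1) (by omega) (by omega)
  obtain ⟨hplen, hpvert, hpstep⟩ := hdiff p (by omega)
  have hp_eq : (w.getVert p).2 = m := by omega
  -- everything strictly between p and q1+1 is below level m
  have hin : ∀ t, p < t → t ≤ q1 → (w.getVert t).2 < m := by
    intro t h1 h2
    rcases le_or_gt t j with h | h
    · exact hp_max t h1 h
    · have ht : t = j + (t - j) := by omega
      rw [ht]
      exact hfmin (t - j) (by omega)
  -- the horizontal displacement between times p+1 and q1 is at most (q1-(p+1))·2^(m-1)
  have hbound : ∀ t, p + 1 ≤ t → t ≤ q1 →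
      Λ.dist (w.getVert (p + 1)).1 (w.getVert t).1 ≤ (t - (p + 1)) * 2 ^ (m - 1) := by
    intro t
    induction t with
    | zero => intro h1 _; exact absurd h1 (by omega)
    | succ t ih =>
      intro h1 h2
      rcases eq_or_lt_of_le h1 with he | hlt
      · rw [← he, SimpleGraph.dist_self]
        exact Nat.zero_le _
      · have hb := ih (by omega) (by omega)
        have htlen : t < w.length := by omega
        have htri := hΛ.dist_triangle (u := (w.getVert (p + 1)).1)
          (v := (w.getVert t).1) (w := (w.getVert (t + 1)).1)
        have hmul : (t + 1 - (p + 1)) * 2 ^ (m - 1)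
            = (t - (p + 1)) * 2 ^ (m - 1) + 2 ^ (m - 1) := by
          rw [show t + 1 - (p + 1) = (t - (p + 1)) + 1 from by omega, Nat.add_mul, Nat.one_mul]
        rcases w.adj_getVert_succ htlen with ⟨h1', _⟩ | ⟨_, _, h3'⟩
        · rw [← h1', hmul]
          exact le_trans hb (Nat.le_add_right _ _)
        · have hlt' : (w.getVert t).2 < m := hin t (by omega) (by omega)
          have hpw : (2 : ℕ) ^ (w.getVert t).2 ≤ 2 ^ (m - 1) :=
            Nat.pow_le_pow_right (by norm_num) (by omega)
          have h3'' : Λ.dist (w.getVert t).1 (w.getVert (t + 1)).1 ≤ 2 ^ (m - 1) :=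
            le_trans h3' hpw
          rw [hmul]
          exact le_trans htri (Nat.add_le_add hb h3'')
  have hpq1 : p + 1 ≤ q1 := by omega
  have hdxy : Λ.dist (w.getVert p).1 (w.getVert (q1 + 1)).1
      ≤ (q1 - (p + 1)) * 2 ^ (m - 1) := by
    have := hbound q1 hpq1 (le_refl q1)
    rwa [← hpvert, hq1vert] at this
  obtain ⟨repl, hrepl⟩ := HoroAux.repl_walk hΛ m hm (q1 - (p + 1))
    (w.getVert p).1 (w.getVert (q1 + 1)).1 hdxy
  have hgp : w.getVert p = ((w.getVert p).1, m) := Prod.ext rfl hp_eq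
  have hgq : w.getVert (q1 + 1) = ((w.getVert (q1 + 1)).1, m) := Prod.ext rfl hq_eq
  -- splice the replacement walk in place of the excursion below level m
  let newWalk : (horoball Λ).Walk a b :=
    ((HoroAux.htake w p).copy rfl hgp).append
      (repl.append ((w.drop (q1 + 1)).copy hgq rfl))
  have hlen : newWalk.length
      = min p w.length + (repl.length + (w.length - (q1 + 1))) := by
    simp [newWalk, SimpleGraph.Walk.length_append, HoroAux.length_htake, HoroAux.length_drop]
  have hminp : min p w.length = p := min_eq_left (by omega)
  have hd := SimpleGraph.dist_le newWalk
  rw [hlen, hminp, ← hgeo] at hd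
  omega
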